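/- arXiv:1301.2835 — 4 statements merged into one kernel-verified Lean document; each statement's English description precedes it below -/
import Mathlib

section
/- Let R = ⊕_{i=1}^∞ R_i be a ring graded by the additive semigroup of positive integers which is a Jacobson radical ring. Then every subring S of R that is generated by homogeneous elements is itself a Jacobson radical ring. -/
/-- An element `a` of a (possibly non-unital) ring is quasi-regular if it has a quasi-inverse
`b`, i.e. `a + b + a * b = a + b + b * a = 0`. -/
def IsQuasiRegular {R : Type*} [NonUnitalRing R] (a : R) : Prop :=
  ∃ b : R, a + b + a * b = 0 ∧ a + b + b * a = 0

/-- A (possibly non-unital) ring is a Jacobson radical ring if all its elements are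
quasi-regular. -/
def IsJacobsonRadicalRing (R : Type*) [NonUnitalRing R] : Prop :=
  ∀ a : R, IsQuasiRegular a

/-- The additive monoid hom sending `x` to its `n`-th homogeneous component (as an element
of `R`). -/
noncomputable def gradedCmp {R : Type*} [NonUnitalRing R] (ℳ : ℕ+ → AddSubgroup R)
    [DirectSum.Decomposition ℳ] (n : ℕ+) : R →+ R :=
  ((ℳ n).subtype).comp <|
    (DFinsupp.evalAddMonoidHom n).comp (DirectSum.decomposeAddEquiv ℳ).toAddMonoidHom

theorem gradedCmp_apply {R : Type*} [NonUnitalRing R] (ℳ : ℕ+ → AddSubgroup R)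
    [DirectSum.Decomposition ℳ] (n : ℕ+) (x : R) :
    gradedCmp ℳ n x = (DirectSum.decompose ℳ x n : R) := rfl

theorem gradedCmp_sum_support {R : Type*} [NonUnitalRing R] (ℳ : ℕ+ → AddSubgroup R)
    [DirectSum.Decomposition ℳ] [∀ (i) (x : ℳ i), Decidable (x ≠ 0)] (x : R) :
    ∑ n ∈ (DirectSum.decompose ℳ x).support, gradedCmp ℳ n x = x := by
  simpa [gradedCmp_apply] using DirectSum.sum_support_decompose ℳ x

/-- Key computation: the `n`-th component of a product `x * y` lies in any subring containing
all components of `x` and all components of `y` of degree `< n`. -/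
theorem gradedCmp_mul_mem {R : Type*} [NonUnitalRing R] (ℳ : ℕ+ → AddSubgroup R)
    [SetLike.GradedMul ℳ] [DirectSum.Decomposition ℳ] (S : NonUnitalSubring R)
    (x y : R) (n : ℕ+) (hx : ∀ i, gradedCmp ℳ i x ∈ S)
    (hy : ∀ j, j < n → gradedCmp ℳ j y ∈ S) :
    gradedCmp ℳ n (x * y) ∈ S := by
  classical
  have key : x * y = ∑ i ∈ (DirectSum.decompose ℳ x).support,
      ∑ j ∈ (DirectSum.decompose ℳ y).support, gradedCmp ℳ i x * gradedCmp ℳ j y := by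
    rw [← Finset.sum_mul_sum, gradedCmp_sum_support, gradedCmp_sum_support]
  rw [key, map_sum]
  refine sum_mem fun i _ => ?_
  rw [map_sum]
  refine sum_mem fun j _ => ?_
  have hmem : gradedCmp ℳ i x * gradedCmp ℳ j y ∈ ℳ (i + j) :=
    SetLike.mul_mem_graded (DirectSum.decompose ℳ x i).2 (DirectSum.decompose ℳ y j).2
  by_cases h : i + j = n
  · rw [gradedCmp_apply, DirectSum.decompose_of_mem_same ℳ (h ▸ hmem)]
    have hj : j < n := by
      have hn : (i : ℕ) + (j : ℕ) = (n : ℕ) := by rw [← PNat.add_coe, h]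
      have hi : 1 ≤ (i : ℕ) := i.2
      have : (j : ℕ) < (n : ℕ) := by omega
      exact_mod_cast this
    exact mul_mem (hx i) (hy j hj)
  · rw [gradedCmp_apply, DirectSum.decompose_of_mem_ne ℳ hmem h]
    exact zero_mem S

/-- Every homogeneous component of an element of a subring generated by homogeneous elements
lies again in that subring. -/
theorem gradedCmp_mem_closure {R : Type*} [NonUnitalRing R] (ℳ : ℕ+ → AddSubgroup R)
    [SetLike.GradedMul ℳ] [DirectSum.Decomposition ℳ]
    (T : Set R) (hT : ∀ x ∈ T, ∃ i : ℕ+, x ∈ ℳ i)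
    {x : R} (hx : x ∈ NonUnitalSubring.closure T) (n : ℕ+) :
    gradedCmp ℳ n x ∈ NonUnitalSubring.closure T := by
  classical
  induction hx using NonUnitalSubring.closure_induction generalizing n with
  | mem z hz =>
    obtain ⟨i, hi⟩ := hT z hz
    by_cases h : i = n
    · rw [gradedCmp_apply, DirectSum.decompose_of_mem_same ℳ (h ▸ hi)]
      exact NonUnitalSubring.subset_closure hz
    · rw [gradedCmp_apply, DirectSum.decompose_of_mem_ne ℳ hi h]
      exact zero_mem _
  | zero => rw [map_zero]; exact zero_mem _
  | add z w hz hw hz' hw' => rw [map_add]; exact add_mem (hz' n) (hw' n)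
  | neg z hz hz' => rw [map_neg]; exact neg_mem (hz' n)
  | mul z w hz hw hz' hw' =>
    exact gradedCmp_mul_mem ℳ _ z w n (fun i => hz' i) (fun j _ => hw' j)

/-- **Homogeneous subrings of a graded Jacobson radical ring are Jacobson radical.**
Let `R = ⊕_{i ≥ 1} Rᵢ` be a ring graded by the additive semigroup of positive integers which is
a Jacobson radical ring.  Then every subring of `R` generated by a set of homogeneous elements
is itself a Jacobson radical ring. -/
theorem isJacobsonRadicalRing_closure_of_homogeneous {R : Type*} [NonUnitalRing R]
    (ℳ : ℕ+ → AddSubgroup R) [SetLike.GradedMul ℳ] [DirectSum.Decomposition ℳ]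
    (hR : IsJacobsonRadicalRing R)
    (T : Set R) (hT : ∀ x ∈ T, ∃ i : ℕ+, x ∈ ℳ i) :
    IsJacobsonRadicalRing (NonUnitalSubring.closure T) := by
  classical
  intro a
  obtain ⟨b, hb1, hb2⟩ := hR (a : R)
  let S := NonUnitalSubring.closure T
  -- components of b lie in S by strong induction on degree
  have hbcmp : ∀ n : ℕ+, gradedCmp ℳ n b ∈ S := by
    intro n
    induction n using PNat.strongInductionOn with
    | _ n ih =>
      have h0 : gradedCmp ℳ n (a : R) + gradedCmp ℳ n b + gradedCmp ℳ n ((a : R) * b) = 0 := by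
        rw [← map_add, ← map_add, hb1, map_zero]
      have hab : gradedCmp ℳ n ((a : R) * b) ∈ S :=
        gradedCmp_mul_mem ℳ S (a : R) b n
          (fun i => gradedCmp_mem_closure ℳ T hT a.2 i) (fun j hj => ih j hj)
      have ha : gradedCmp ℳ n (a : R) ∈ S := gradedCmp_mem_closure ℳ T hT a.2 n
      have hbn : gradedCmp ℳ n b =
          -(gradedCmp ℳ n (a : R)) - gradedCmp ℳ n ((a : R) * b) := by
        have h0' : (gradedCmp ℳ n (a : R) + gradedCmp ℳ n ((a : R) * b))
            + gradedCmp ℳ n b = 0 := by rw [← h0]; abel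
        rw [(neg_eq_of_add_eq_zero_right h0').symm]; abel
      rw [hbn]
      exact sub_mem (neg_mem ha) hab
  have hbS : b ∈ S := by
    rw [← gradedCmp_sum_support ℳ b]
    exact sum_mem fun n _ => hbcmp n
  refine ⟨⟨b, hbS⟩, ?_, ?_⟩ <;> apply Subtype.ext <;>
    simp only [NonUnitalSubring.val_add, NonUnitalSubring.val_mul, ZeroMemClass.coe_zero]
  · exact hb1
  · exact hb2
end

section
/- Let R = ⊕_{i∈ℤ} R_i be a ℤ-graded (associative, not necessarily unital) ring and let N be the nil radical of R. If N contains no nonzero homogeneous elements, then N = 0. -/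
/-- An iterated-product power for non-unital rings: `ppow a n = a ^ (n + 1)`. -/
def ppow {R : Type*} [NonUnitalRing R] (a : R) : ℕ → R
  | 0 => a
  | n + 1 => ppow a n * a

/-- An element of a (possibly non-unital) ring is nilpotent if some positive power vanishes. -/
def IsNilElem {R : Type*} [NonUnitalRing R] (a : R) : Prop :=
  ∃ n : ℕ, ppow a n = 0

/-- A two-sided ideal is nil if all of its elements are nilpotent. -/
def TwoSidedIdeal.IsNil {R : Type*} [NonUnitalRing R] (I : TwoSidedIdeal R) : Prop :=
  ∀ x ∈ I, IsNilElem x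

/-- The nil radical of a (possibly non-unital) ring: the sum of all its nil two-sided ideals. -/
noncomputable def nilRad (R : Type*) [NonUnitalRing R] : TwoSidedIdeal R :=
  sSup {I : TwoSidedIdeal R | I.IsNil}

lemma ppow_succ_left {R : Type*} [NonUnitalRing R] (c : R) (n : ℕ) :
    ppow c (n + 1) = c * ppow c n := by
  induction n with
  | zero => rfl
  | succ n ih =>
    show ppow c (n + 1) * c = c * ppow c (n + 1)
    conv_lhs => rw [ih, mul_assoc]
    rfl

open DirectSum

set_option linter.unusedSectionVars false
set_option maxHeartbeats 1000000

namespace NilRadAux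

variable {R : Type*} [NonUnitalRing R] (ℳ : ℤ → AddSubgroup R)
  [SetLike.GradedMul ℳ] [DirectSum.Decomposition ℳ]

noncomputable def pi (e : ℤ) (y : R) : R := (DirectSum.decompose ℳ y e : R)

open Classical in
noncomputable def dsupp (y : R) : Finset ℤ := (DirectSum.decompose ℳ y).support

lemma pi_mem (e : ℤ) (y : R) : pi ℳ e y ∈ ℳ e := SetLike.coe_mem _

lemma pi_add (e : ℤ) (y z : R) : pi ℳ e (y + z) = pi ℳ e y + pi ℳ e z := by
  unfold pi
  rw [DirectSum.decompose_add, DFinsupp.add_apply, AddSubgroup.coe_add]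

lemma pi_zero (e : ℤ) : pi ℳ e (0 : R) = 0 := by
  unfold pi
  rw [DirectSum.decompose_zero]
  rfl

lemma pi_neg (e : ℤ) (y : R) : pi ℳ e (-y) = -pi ℳ e y := by
  have h := pi_add ℳ e y (-y)
  rw [add_neg_cancel, pi_zero] at h
  exact (neg_eq_of_add_eq_zero_right h.symm).symm

lemma pi_of_mem_same {e : ℤ} {y : R} (hy : y ∈ ℳ e) : pi ℳ e y = y :=
  DirectSum.decompose_of_mem_same ℳ hy

lemma pi_of_mem_ne {e f : ℤ} {y : R} (hy : y ∈ ℳ e) (hne : e ≠ f) : pi ℳ f y = 0 :=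
  DirectSum.decompose_of_mem_ne ℳ hy hne

lemma sum_dsupp (y : R) : ∑ l ∈ dsupp ℳ y, pi ℳ l y = y := by
  classical
  unfold dsupp pi
  exact DirectSum.sum_support_decompose ℳ y

lemma mem_dsupp_iff {l : ℤ} {y : R} : l ∈ dsupp ℳ y ↔ pi ℳ l y ≠ 0 := by
  classical
  unfold dsupp pi
  rw [DFinsupp.mem_support_iff]
  constructor
  · intro hne hc
    exact hne (Subtype.ext hc)
  · intro hne hc
    exact hne (by rw [hc]; rfl)

lemma dsupp_nonempty_of_ne_zero {y : R} (hy : y ≠ 0) : (dsupp ℳ y).Nonempty := by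
  by_contra hc
  rw [Finset.not_nonempty_iff_eq_empty] at hc
  apply hy
  have := sum_dsupp ℳ y
  rw [hc] at this
  simpa using this.symm

lemma pi_sum (e : ℤ) {α : Type*} (F : Finset α) (t : α → R) :
    pi ℳ e (∑ f ∈ F, t f) = ∑ f ∈ F, pi ℳ e (t f) := by
  classical
  induction F using Finset.induction_on with
  | empty => simp [pi_zero]
  | insert a s hne ih => rw [Finset.sum_insert hne, Finset.sum_insert hne, pi_add, ih]

lemma eq_zero_of_sum_homogeneous {F : Finset ℤ} {t : ℤ → R} (ht : ∀ e, t e ∈ ℳ e)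
    (h0 : ∑ e ∈ F, t e = 0) : ∀ e ∈ F, t e = 0 := by
  intro e he
  have h1 : pi ℳ e (∑ f ∈ F, t f) = t e := by
    rw [pi_sum]
    rw [Finset.sum_eq_single e]
    · exact pi_of_mem_same ℳ (ht e)
    · intro f hf hfe
      exact pi_of_mem_ne ℳ (ht f) hfe
    · intro hc; exact absurd he hc
  rw [h0, pi_zero] at h1
  exact h1.symm

/-! ### The paired-lift subgroups -/

variable (I : TwoSidedIdeal R) (x : R) (d : ℤ)

/-- Pairs `(t, A)` where `A ∈ I` has homogeneous support inside `{e - d + l | l ∈ dsupp x}`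
and `t` is the degree-`e` (top) component of `A`. -/
def Ve (e : ℤ) : AddSubgroup (R × R) where
  carrier := {p | p.2 ∈ I ∧ p.1 = pi ℳ e p.2 ∧
    ∀ f : ℤ, (∀ l ∈ dsupp ℳ x, f ≠ e - d + l) → pi ℳ f p.2 = 0}
  zero_mem' := by
    refine ⟨I.zero_mem, ?_, ?_⟩
    · show (0:R) = pi ℳ _ (0:R)
      rw [pi_zero]
    · intro f _
      show pi ℳ f (0:R) = 0
      exact pi_zero ℳ f
  add_mem' := by
    rintro p q ⟨hp1, hp2, hp3⟩ ⟨hq1, hq2, hq3⟩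
    refine ⟨I.add_mem hp1 hq1, ?_, ?_⟩
    · show p.1 + q.1 = _
      rw [hp2, hq2, ← pi_add]; rfl
    · intro f hf
      show pi ℳ f (p.2 + q.2) = 0
      rw [pi_add, hp3 f hf, hq3 f hf, add_zero]
  neg_mem' := by
    rintro p ⟨hp1, hp2, hp3⟩
    refine ⟨I.neg_mem hp1, ?_, ?_⟩
    · show -p.1 = pi ℳ _ (-p.2)
      rw [pi_neg, hp2]
    · intro f hf
      show pi ℳ f (-p.2) = 0
      rw [pi_neg, hp3 f hf, neg_zero]

variable (b : R)

/-- generators of the paired ideal -/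
def WG : Set (R × R) :=
  {p | (∃ r s, p = (r*b*s, r*x*s)) ∨ (∃ r, p = (r*b, r*x)) ∨ (∃ s, p = (b*s, x*s)) ∨
    p = (b, x)}

def W : AddSubgroup (R × R) := AddSubgroup.closure (WG x b)

/-- all pairs expressible as finite sums of homogeneous paired pieces -/
def VV : AddSubgroup (R × R) := AddSubgroup.closure (⋃ e : ℤ, (Ve ℳ I x d e : Set (R × R)))

section gens

variable (hxI : x ∈ I) (hdmem : d ∈ dsupp ℳ x) (hb : b = pi ℳ d x)

include hxI hdmem hb in
lemma genTwo {i j : ℤ} {r' s' : R} (hr : r' ∈ ℳ i) (hs : s' ∈ ℳ j) :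
    (r' * b * s', r' * x * s') ∈ Ve ℳ I x d (i + d + j) := by
  have hA : r' * x * s' = ∑ l ∈ dsupp ℳ x, r' * pi ℳ l x * s' := by
    conv_lhs => rw [← sum_dsupp ℳ x]
    rw [Finset.mul_sum, Finset.sum_mul]
  have hmem : ∀ l : ℤ, r' * pi ℳ l x * s' ∈ ℳ (i + l + j) := fun l =>
    SetLike.mul_mem_graded (SetLike.mul_mem_graded hr (pi_mem ℳ l x)) hs
  refine ⟨I.mul_mem_right _ _ (I.mul_mem_left _ _ hxI), ?_, ?_⟩
  · show r' * b * s' = _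
    rw [hA, pi_sum, Finset.sum_eq_single d]
    · rw [pi_of_mem_same ℳ (hmem d), hb]
    · intro l hl hld
      exact pi_of_mem_ne ℳ (hmem l) (by omega)
    · intro hc; exact absurd hdmem hc
  · intro f hf
    show pi ℳ f (r' * x * s') = 0
    rw [hA, pi_sum]
    apply Finset.sum_eq_zero
    intro l hl
    have := hf l hl
    exact pi_of_mem_ne ℳ (hmem l) (by omega)

include hxI hdmem hb in
lemma genLeft {i : ℤ} {r' : R} (hr : r' ∈ ℳ i) :
    (r' * b, r' * x) ∈ Ve ℳ I x d (i + d) := by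
  have hA : r' * x = ∑ l ∈ dsupp ℳ x, r' * pi ℳ l x := by
    conv_lhs => rw [← sum_dsupp ℳ x]
    rw [Finset.mul_sum]
  have hmem : ∀ l : ℤ, r' * pi ℳ l x ∈ ℳ (i + l) := fun l =>
    SetLike.mul_mem_graded hr (pi_mem ℳ l x)
  refine ⟨I.mul_mem_left _ _ hxI, ?_, ?_⟩
  · show r' * b = _
    rw [hA, pi_sum, Finset.sum_eq_single d]
    · rw [pi_of_mem_same ℳ (hmem d), hb]
    · intro l hl hld
      exact pi_of_mem_ne ℳ (hmem l) (by omega)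
    · intro hc; exact absurd hdmem hc
  · intro f hf
    show pi ℳ f (r' * x) = 0
    rw [hA, pi_sum]
    apply Finset.sum_eq_zero
    intro l hl
    have := hf l hl
    exact pi_of_mem_ne ℳ (hmem l) (by omega)

include hxI hdmem hb in
lemma genRight {j : ℤ} {s' : R} (hs : s' ∈ ℳ j) :
    (b * s', x * s') ∈ Ve ℳ I x d (d + j) := by
  have hA : x * s' = ∑ l ∈ dsupp ℳ x, pi ℳ l x * s' := by
    conv_lhs => rw [← sum_dsupp ℳ x]
    rw [Finset.sum_mul]
  have hmem : ∀ l : ℤ, pi ℳ l x * s' ∈ ℳ (l + j) := fun l =>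
    SetLike.mul_mem_graded (pi_mem ℳ l x) hs
  refine ⟨I.mul_mem_right _ _ hxI, ?_, ?_⟩
  · show b * s' = _
    rw [hA, pi_sum, Finset.sum_eq_single d]
    · rw [pi_of_mem_same ℳ (hmem d), hb]
    · intro l hl hld
      exact pi_of_mem_ne ℳ (hmem l) (by omega)
    · intro hc; exact absurd hdmem hc
  · intro f hf
    show pi ℳ f (x * s') = 0
    rw [hA, pi_sum]
    apply Finset.sum_eq_zero
    intro l hl
    have := hf l hl
    exact pi_of_mem_ne ℳ (hmem l) (by omega)

include hxI hdmem hb in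
lemma genX : (b, x) ∈ Ve ℳ I x d d := by
  refine ⟨hxI, ?_, ?_⟩
  · exact hb
  · intro f hf
    by_contra hc
    have hfd : f ∈ dsupp ℳ x := (mem_dsupp_iff ℳ).2 hc
    exact (hf f hfd) (by omega)

include hxI hdmem hb in
lemma W_le_VV : W x b ≤ VV ℳ I x d := by
  rw [W, AddSubgroup.closure_le]
  rintro p (⟨r, s, rfl⟩ | ⟨r, rfl⟩ | ⟨s, rfl⟩ | rfl)
  · have hsplit : (r*b*s, r*x*s) =
        ∑ i ∈ dsupp ℳ r, ∑ j ∈ dsupp ℳ s, ((pi ℳ i r)*b*(pi ℳ j s), (pi ℳ i r)*x*(pi ℳ j s)) := by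
      have h1 : ∀ (c : R), r*c*s = ∑ i ∈ dsupp ℳ r, ∑ j ∈ dsupp ℳ s,
          (pi ℳ i r)*c*(pi ℳ j s) := by
        intro c
        conv_lhs => rw [← sum_dsupp ℳ r, ← sum_dsupp ℳ s]
        rw [Finset.sum_mul, Finset.sum_mul]
        apply Finset.sum_congr rfl
        intro i _
        rw [Finset.mul_sum]
      ext
      · rw [Prod.fst_sum]
        simp only [Prod.fst_sum]
        exact h1 b
      · rw [Prod.snd_sum]
        simp only [Prod.snd_sum]
        exact h1 x
    rw [hsplit]
    apply AddSubgroup.sum_mem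
    intro i _
    apply AddSubgroup.sum_mem
    intro j _
    apply AddSubgroup.subset_closure
    exact Set.mem_iUnion.2 ⟨i + d + j, genTwo ℳ I x d b hxI hdmem hb (pi_mem ℳ i r) (pi_mem ℳ j s)⟩
  · have hsplit : (r*b, r*x) = ∑ i ∈ dsupp ℳ r, ((pi ℳ i r)*b, (pi ℳ i r)*x) := by
      have h1 : ∀ (c : R), r*c = ∑ i ∈ dsupp ℳ r, (pi ℳ i r)*c := by
        intro c
        conv_lhs => rw [← sum_dsupp ℳ r]
        rw [Finset.sum_mul]
      ext
      · rw [Prod.fst_sum]; exact h1 b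
      · rw [Prod.snd_sum]; exact h1 x
    rw [hsplit]
    apply AddSubgroup.sum_mem
    intro i _
    apply AddSubgroup.subset_closure
    exact Set.mem_iUnion.2 ⟨i + d, genLeft ℳ I x d b hxI hdmem hb (pi_mem ℳ i r)⟩
  · have hsplit : (b*s, x*s) = ∑ j ∈ dsupp ℳ s, (b*(pi ℳ j s), x*(pi ℳ j s)) := by
      have h1 : ∀ (c : R), c*s = ∑ j ∈ dsupp ℳ s, c*(pi ℳ j s) := by
        intro c
        conv_lhs => rw [← sum_dsupp ℳ s]
        rw [Finset.mul_sum]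
      ext
      · rw [Prod.fst_sum]; exact h1 b
      · rw [Prod.snd_sum]; exact h1 x
    rw [hsplit]
    apply AddSubgroup.sum_mem
    intro j _
    apply AddSubgroup.subset_closure
    exact Set.mem_iUnion.2 ⟨d + j, genRight ℳ I x d b hxI hdmem hb (pi_mem ℳ j s)⟩
  · apply AddSubgroup.subset_closure
    exact Set.mem_iUnion.2 ⟨d, genX ℳ I x d b hxI hdmem hb⟩

end gens

section keys

variable (hdmem : d ∈ dsupp ℳ x)
variable (hdmax : ∀ l ∈ dsupp ℳ x, l ≤ d)
variable (hmin : ∀ z ∈ I, z ≠ 0 → (dsupp ℳ x).card ≤ (dsupp ℳ z).card)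

include hdmem hmin in
lemma veA {e : ℤ} {p : R × R} (hp : p ∈ Ve ℳ I x d e) (h1 : p.1 = 0) : p.2 = 0 := by
  classical
  obtain ⟨hI2, h2, h3⟩ := hp
  by_contra h4
  have hsub : dsupp ℳ p.2 ⊆ ((dsupp ℳ x).erase d).image (fun l => e - d + l) := by
    intro f hf
    have hfne : pi ℳ f p.2 ≠ 0 := (mem_dsupp_iff ℳ).1 hf
    have hcon : ¬ (∀ l ∈ dsupp ℳ x, f ≠ e - d + l) := fun hc => hfne (h3 f hc)
    push_neg at hcon
    obtain ⟨l, hl, hfl⟩ := hcon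
    have hld : l ≠ d := by
      rintro rfl
      apply hfne
      have hfe : f = e := by omega
      rw [hfe, ← h2, h1]
    exact Finset.mem_image.2 ⟨l, Finset.mem_erase.2 ⟨hld, hl⟩, by omega⟩
  have hc1 : (dsupp ℳ x).card ≤ (dsupp ℳ p.2).card := hmin _ hI2 h4
  have hc2 : (dsupp ℳ p.2).card ≤ ((dsupp ℳ x).erase d).card :=
    le_trans (Finset.card_le_card hsub) Finset.card_image_le
  have hc3 : ((dsupp ℳ x).erase d).card = (dsupp ℳ x).card - 1 :=
    Finset.card_erase_of_mem hdmem
  have hc4 : 1 ≤ (dsupp ℳ x).card := Finset.card_pos.2 ⟨d, hdmem⟩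
  omega

lemma nf {p : R × R} (hp : p ∈ VV ℳ I x d) :
    ∃ (F : Finset ℤ) (q : ℤ → R × R), (∀ e, q e ∈ Ve ℳ I x d e) ∧ (∀ e ∉ F, q e = 0) ∧
      p = ∑ e ∈ F, q e := by
  classical
  refine AddSubgroup.closure_induction ?_ ?_ ?_ ?_ hp
  · intro p hp
    rw [Set.mem_iUnion] at hp
    obtain ⟨e₀, he₀⟩ := hp
    refine ⟨{e₀}, fun e => if e = e₀ then p else 0, ?_, ?_, ?_⟩
    · intro e
      show (if e = e₀ then p else 0) ∈ Ve ℳ I x d e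
      by_cases he : e = e₀
      · rw [if_pos he, he]; exact he₀
      · rw [if_neg he]; exact (Ve ℳ I x d e).zero_mem
    · intro e he
      show (if e = e₀ then p else 0) = 0
      rw [if_neg (by simpa using he)]
    · simp
  · exact ⟨∅, fun _ => 0, fun e => (Ve ℳ I x d e).zero_mem, fun _ _ => rfl, by simp⟩
  · rintro p q _ _ ⟨F1, q1, h11, h12, rfl⟩ ⟨F2, q2, h21, h22, rfl⟩
    refine ⟨F1 ∪ F2, fun e => q1 e + q2 e, fun e => (Ve ℳ I x d e).add_mem (h11 e) (h21 e),
      ?_, ?_⟩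
    · intro e he
      show q1 e + q2 e = 0
      rw [h12 e (fun hc => he (Finset.mem_union_left _ hc)),
        h22 e (fun hc => he (Finset.mem_union_right _ hc)), add_zero]
    · rw [Finset.sum_add_distrib]
      congr 1
      · exact Finset.sum_subset Finset.subset_union_left
          (fun e _ he => h12 e he)
      · exact Finset.sum_subset Finset.subset_union_right
          (fun e _ he => h22 e he)
  · rintro p _ ⟨F, q, h1, h2, rfl⟩
    refine ⟨F, fun e => -(q e), fun e => (Ve ℳ I x d e).neg_mem (h1 e),
      fun e he => by show -q e = 0; rw [h2 e he, neg_zero], ?_⟩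
    rw [Finset.sum_neg_distrib]

include hdmem hmin in
lemma fst_zero {p : R × R} (hp : p ∈ VV ℳ I x d) (h1 : p.1 = 0) : p.2 = 0 := by
  obtain ⟨F, q, hq, hout, rfl⟩ := nf ℳ I x d hp
  rw [Prod.fst_sum] at h1
  have hhom : ∀ e, (q e).1 ∈ ℳ e := fun e => ((hq e).2.1) ▸ pi_mem ℳ e _
  have hz := eq_zero_of_sum_homogeneous ℳ hhom h1
  rw [Prod.snd_sum]
  exact Finset.sum_eq_zero fun e he => veA ℳ I x d hdmem hmin (hq e) (hz e he)

include hdmem hdmax hmin in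
lemma allzero : ∀ (n : ℕ) (F : Finset ℤ) (q : ℤ → R × R), F.card = n →
    (∀ e, q e ∈ Ve ℳ I x d e) → (∑ e ∈ F, (q e).2 = 0) → ∀ e ∈ F, (q e).2 = 0 := by
  classical
  intro n
  induction n with
  | zero =>
    intro F q hcard _ _ e he
    rw [Finset.card_eq_zero] at hcard
    subst hcard
    exact absurd he (Finset.notMem_empty e)
  | succ n ih =>
    intro F q hcard hq hsum e he
    have hFne : F.Nonempty := Finset.card_pos.1 (by omega)
    set eT := F.max' hFne with heT
    have heTmem : eT ∈ F := F.max'_mem hFne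
    have htop : (q eT).2 = 0 := by
      have h5 : pi ℳ eT (∑ f ∈ F, (q f).2) = (q eT).1 := by
        rw [pi_sum, Finset.sum_eq_single eT]
        · exact ((hq eT).2.1).symm
        · intro f hf hfne
          have hflt : f < eT := lt_of_le_of_ne (F.le_max' f hf) hfne
          refine (hq f).2.2 eT (fun l hl => ?_)
          have := hdmax l hl
          omega
        · intro hc; exact absurd heTmem hc
      rw [hsum, pi_zero] at h5
      exact veA ℳ I x d hdmem hmin (hq eT) h5.symm
    have hrest : ∑ f ∈ F.erase eT, (q f).2 = 0 := by
      have h6 : ∑ f ∈ F.erase eT, (q f).2 + (q eT).2 = ∑ f ∈ F, (q f).2 :=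
        Finset.sum_erase_add F (fun f => (q f).2) heTmem
      rw [htop, add_zero] at h6
      rw [hsum] at h6
      exact h6
    by_cases heeT : e = eT
    · rw [heeT]; exact htop
    · exact ih (F.erase eT) q (by rw [Finset.card_erase_of_mem heTmem, hcard]; omega) hq hrest e
        (Finset.mem_erase.2 ⟨heeT, he⟩)

include hdmem hdmax hmin in
lemma snd_zero {p : R × R} (hp : p ∈ VV ℳ I x d) (h2 : p.2 = 0) : p.1 = 0 := by
  obtain ⟨F, q, hq, hout, rfl⟩ := nf ℳ I x d hp
  rw [Prod.snd_sum] at h2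
  have hz := allzero ℳ I x d hdmem hdmax hmin F.card F q rfl hq h2
  rw [Prod.fst_sum]
  refine Finset.sum_eq_zero fun e he => ?_
  rw [(hq e).2.1, hz e he, pi_zero]

end keys

/-! ### closure properties of `W` -/

lemma W_mul_right {p : R × R} (hp : p ∈ W x b) (v : R) : p * (v, v) ∈ W x b := by
  refine AddSubgroup.closure_induction ?_ ?_ ?_ ?_ hp
  · rintro p (⟨r, s, rfl⟩ | ⟨r, rfl⟩ | ⟨s, rfl⟩ | rfl) <;>
      rw [Prod.mk_mul_mk] <;> apply AddSubgroup.subset_closure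
    · exact Or.inl ⟨r, s * v, by simp [Prod.ext_iff, mul_assoc]⟩
    · exact Or.inl ⟨r, v, rfl⟩
    · exact Or.inr (Or.inr (Or.inl ⟨s * v, by simp [Prod.ext_iff, mul_assoc]⟩))
    · exact Or.inr (Or.inr (Or.inl ⟨v, rfl⟩))
  · rw [zero_mul]; exact (W x b).zero_mem
  · intro p q _ _ h1 h2
    rw [add_mul]
    exact (W x b).add_mem h1 h2
  · intro p _ h1
    rw [neg_mul]
    exact (W x b).neg_mem h1

lemma W_mul_left {p : R × R} (hp : p ∈ W x b) (v : R) : (v, v) * p ∈ W x b := by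
  refine AddSubgroup.closure_induction ?_ ?_ ?_ ?_ hp
  · rintro p (⟨r, s, rfl⟩ | ⟨r, rfl⟩ | ⟨s, rfl⟩ | rfl) <;>
      rw [Prod.mk_mul_mk] <;> apply AddSubgroup.subset_closure
    · exact Or.inl ⟨v * r, s, by simp [Prod.ext_iff, mul_assoc]⟩
    · exact Or.inr (Or.inl ⟨v * r, by simp [Prod.ext_iff, mul_assoc]⟩)
    · exact Or.inl ⟨v, s, by simp [Prod.ext_iff, mul_assoc]⟩
    · exact Or.inr (Or.inl ⟨v, rfl⟩)
  · rw [mul_zero]; exact (W x b).zero_mem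
  · intro p q _ _ h1 h2
    rw [mul_add]
    exact (W x b).add_mem h1 h2
  · intro p _ h1
    rw [mul_neg]
    exact (W x b).neg_mem h1

lemma W_snd_mem (hxI : x ∈ I) {p : R × R} (hp : p ∈ W x b) : p.2 ∈ I := by
  refine AddSubgroup.closure_induction ?_ ?_ ?_ ?_ hp
  · rintro p (⟨r, s, rfl⟩ | ⟨r, rfl⟩ | ⟨s, rfl⟩ | rfl)
    · exact I.mul_mem_right _ _ (I.mul_mem_left _ _ hxI)
    · exact I.mul_mem_left _ _ hxI
    · exact I.mul_mem_right _ _ hxI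
    · exact hxI
  · exact I.zero_mem
  · intro p q _ _ h1 h2
    exact I.add_mem h1 h2
  · intro p _ h1
    exact I.neg_mem h1

end NilRadAux

/-- Let `R = ⊕_{i ∈ ℤ} Rᵢ` be a `ℤ`-graded (associative, not necessarily unital) ring and let
`N` be its nil radical.  If `N` contains no nonzero homogeneous elements, then `N = 0`. -/
theorem nilRad_eq_bot_of_no_homogeneous {R : Type*} [NonUnitalRing R]
    (ℳ : ℤ → AddSubgroup R) [SetLike.GradedMul ℳ] [DirectSum.Decomposition ℳ]
    (h : ∀ x ∈ nilRad R, (∃ i : ℤ, x ∈ ℳ i) → x = 0) :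
    nilRad R = ⊥ := by
  classical
  refine le_antisymm ?_ bot_le
  show sSup {I : TwoSidedIdeal R | I.IsNil} ≤ ⊥
  apply sSup_le
  intro J hJ
  rw [TwoSidedIdeal.le_iff]
  intro y hy
  have hy' : y ∈ J := hy
  refine (TwoSidedIdeal.mem_bot R).2 ?_
  by_contra hy0
  -- choose a nonzero element of `J` with minimal homogeneous support
  have hSne : {n : ℕ | ∃ z, z ∈ J ∧ z ≠ 0 ∧ (NilRadAux.dsupp ℳ z).card = n}.Nonempty :=
    ⟨(NilRadAux.dsupp ℳ y).card, y, hy', hy0, rfl⟩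
  obtain ⟨a, haJ, ha0, hacard⟩ := Nat.sInf_mem hSne
  have hmin : ∀ z ∈ J, z ≠ 0 → (NilRadAux.dsupp ℳ a).card ≤ (NilRadAux.dsupp ℳ z).card := by
    intro z hz hz0
    rw [hacard]
    exact Nat.sInf_le ⟨z, hz, hz0, rfl⟩
  have hane := NilRadAux.dsupp_nonempty_of_ne_zero ℳ ha0
  set d : ℤ := (NilRadAux.dsupp ℳ a).max' hane with hd
  have hdmem : d ∈ NilRadAux.dsupp ℳ a := Finset.max'_mem _ hane
  have hdmax : ∀ l ∈ NilRadAux.dsupp ℳ a, l ≤ d := fun l hl => Finset.le_max' _ l hl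
  set b : R := NilRadAux.pi ℳ d a with hb
  have hbne : b ≠ 0 := (NilRadAux.mem_dsupp_iff ℳ).1 hdmem
  -- the transfer principles between a `b`-expression and its `a`-lift
  have hWV : NilRadAux.W a b ≤ NilRadAux.VV ℳ J a d :=
    NilRadAux.W_le_VV ℳ J a d b haJ hdmem hb
  have key1 : ∀ p ∈ NilRadAux.W a b, p.1 = 0 → p.2 = 0 := fun p hp h1 =>
    NilRadAux.fst_zero ℳ J a d hdmem hmin (hWV hp) h1
  have key2 : ∀ p ∈ NilRadAux.W a b, p.2 = 0 → p.1 = 0 := fun p hp h2 =>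
    NilRadAux.snd_zero ℳ J a d hdmem hdmax hmin (hWV hp) h2
  -- the two-sided ideal generated by `b`
  let Jb : TwoSidedIdeal R := TwoSidedIdeal.mk' {t | ∃ A, (t, A) ∈ NilRadAux.W a b}
    ⟨0, (NilRadAux.W a b).zero_mem⟩
    (by
      rintro u v ⟨A1, h1⟩ ⟨A2, h2⟩
      exact ⟨A1 + A2, (NilRadAux.W a b).add_mem h1 h2⟩)
    (by
      rintro u ⟨A1, h1⟩
      exact ⟨-A1, (NilRadAux.W a b).neg_mem h1⟩)
    (by
      rintro u v ⟨A1, h1⟩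
      exact ⟨u * A1, by simpa [Prod.mk_mul_mk] using NilRadAux.W_mul_left a b h1 u⟩)
    (by
      rintro u v ⟨A1, h1⟩
      exact ⟨A1 * v, by simpa [Prod.mk_mul_mk] using NilRadAux.W_mul_right a b h1 v⟩)
  have hmem : ∀ t : R, t ∈ Jb ↔ ∃ A, (t, A) ∈ NilRadAux.W a b := fun t =>
    TwoSidedIdeal.mem_mk' _ _ _ _ _ _ t
  have hbJb : b ∈ Jb :=
    (hmem b).2 ⟨a, AddSubgroup.subset_closure (Or.inr (Or.inr (Or.inr rfl)))⟩
  -- `Jb` is nil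
  have hJbnil : Jb.IsNil := by
    intro t ht
    rw [hmem] at ht
    obtain ⟨A, hW⟩ := ht
    have hAJ : A ∈ J := NilRadAux.W_snd_mem J a b haJ hW
    have hAnil : IsNilElem A := hJ A hAJ
    by_cases hA0 : A = 0
    · exact ⟨0, key2 _ hW hA0⟩
    · obtain ⟨N, hN⟩ := hAnil
      have hcomm : A * t = t * A := by
        have h1 : (t * t, A * t) ∈ NilRadAux.W a b := by
          simpa [Prod.mk_mul_mk] using NilRadAux.W_mul_right a b hW t
        have h2 : (t * t, t * A) ∈ NilRadAux.W a b := by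
          simpa [Prod.mk_mul_mk] using NilRadAux.W_mul_left a b hW t
        have h3 : ((0 : R), A * t - t * A) ∈ NilRadAux.W a b := by
          have h4 := (NilRadAux.W a b).sub_mem h1 h2
          simpa [Prod.mk_sub_mk] using h4
        exact sub_eq_zero.1 (key1 _ h3 rfl)
      have hstep : ∀ v : R, A * v = 0 → t * v = 0 := by
        intro v hv
        have h1 : (t * v, A * v) ∈ NilRadAux.W a b := by
          simpa [Prod.mk_mul_mk] using NilRadAux.W_mul_right a b hW v
        rw [hv] at h1
        exact key2 _ h1 rfl
      have hcommp : ∀ n, ppow t n * A = A * ppow t n := by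
        intro n
        induction n with
        | zero => exact hcomm.symm
        | succ n ih =>
          show (ppow t n * t) * A = A * (ppow t n * t)
          rw [mul_assoc, ← hcomm, ← mul_assoc, ih, mul_assoc]
      have chain : ∀ i j : ℕ, i + j = N → ppow t i * ppow A j = 0 := by
        intro i
        induction i with
        | zero =>
          intro j hj
          have hj0 : ppow A j = 0 := by
            rw [show j = N by omega]
            exact hN
          show t * ppow A j = 0
          rw [hj0, mul_zero]
        | succ i ih =>
          intro j hj
          have hprev : ppow t i * ppow A (j + 1) = 0 := ih (j + 1) (by omega)
          have h5 : A * (ppow t i * ppow A j) = 0 := by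
            rw [← mul_assoc, ← hcommp i, mul_assoc, ← ppow_succ_left]
            exact hprev
          have h6 := hstep _ h5
          rw [← mul_assoc, show t * ppow t i = ppow t (i + 1) from (ppow_succ_left t i).symm] at h6
          exact h6
      have hfin : ppow t N * A = 0 := chain N 0 (by omega)
      have hfin2 : A * ppow t N = 0 := by rw [← hcommp N]; exact hfin
      have hfin3 : t * ppow t N = 0 := hstep _ hfin2
      exact ⟨N + 1, by rw [ppow_succ_left]; exact hfin3⟩
  -- conclude
  have hle : Jb ≤ nilRad R := le_sSup hJbnil
  have hbmem : b ∈ nilRad R := by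
    rw [TwoSidedIdeal.le_iff] at hle
    exact hle hbJb
  exact hbne (h b hbmem ⟨d, hb ▸ NilRadAux.pi_mem ℳ d a⟩)
end

section
/- Let R be a (not necessarily unital) ring such that every subring of R is a Jacobson radical ring. Then R is nil, i.e. every element of R is nilpotent. -/
/-- `ℤ` is a Jacobson ring. -/
lemma int_isJacobsonRing : IsJacobsonRing ℤ := by
  rw [isJacobsonRing_iff_prime_eq]
  intro P hP
  by_cases hbot : P = ⊥
  · subst hbot
    refine le_antisymm (fun x hx => ?_) Ideal.le_jacobson
    have := Ideal.mem_jacobson_bot.mp hx x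
    rcases Int.isUnit_iff.mp this with h | h <;>
      · simp only [Ideal.mem_bot]; nlinarith
  · exact Ideal.jacobson_eq_self_of_isMaximal (H := IsPrime.to_maximal_ideal hbot)

open Polynomial

lemma ppow_mem {R : Type*} [NonUnitalRing R] (a : R) (n : ℕ) :
    ppow a n ∈ NonUnitalSubring.closure {a} := by
  induction n with
  | zero => exact NonUnitalSubring.subset_closure rfl
  | succ n ih => exact mul_mem ih (NonUnitalSubring.subset_closure rfl)

lemma inr_ppow {R : Type*} [NonUnitalRing R] (a : R) (n : ℕ) :
    ((ppow a n : R) : Unitization ℤ R) = (a : Unitization ℤ R) ^ (n + 1) := by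
  induction n with
  | zero => simp [ppow]
  | succ n ih => rw [ppow, Unitization.inr_mul, ih]; exact (pow_succ _ _).symm

/-- A (possibly non-unital) ring all of whose subrings are Jacobson radical rings is nil. -/
theorem isNil_of_all_subrings_jacobsonRadical {R : Type*} [NonUnitalRing R]
    (h : ∀ S : NonUnitalSubring R, IsJacobsonRadicalRing S) :
    ∀ a : R, IsNilElem a := by
  intro a
  classical
  have : IsJacobsonRing ℤ := int_isJacobsonRing
  set T := Unitization ℤ R with hT
  set φ : ℤ[X] →+* T := (Polynomial.aeval (↑a : T)).toRingHom with hφ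
  set A : NonUnitalSubring R := NonUnitalSubring.closure {a} with hA
  -- representation lemma
  have repr : ∀ f : ℤ[X], ∃ s : R, s ∈ A ∧ φ f = @algebraMap ℤ T _ Unitization.instSemiring _ (f.coeff 0) + ↑s := by
    intro f
    induction f using Polynomial.induction_on with
    | C c =>
      exact ⟨0, zero_mem A, by simp [hφ]⟩
    | add p q hp hq =>
      obtain ⟨s, hs, hps⟩ := hp
      obtain ⟨t, ht, hqt⟩ := hq
      refine ⟨s + t, add_mem hs ht, ?_⟩
      rw [map_add, hps, hqt, Polynomial.coeff_add, map_add, Unitization.inr_add]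
      abel
    | monomial n c _ =>
      refine ⟨c • ppow a n, zsmul_mem (ppow_mem a n) c, ?_⟩
      have h1 : φ (C c * X ^ (n + 1)) = @algebraMap ℤ T _ Unitization.instSemiring _ c * (↑a : T) ^ (n + 1) := by
        simp [hφ, Polynomial.aeval_X_pow]
      have h2 : ((C c * X ^ (n + 1) : ℤ[X])).coeff 0 = 0 := by
        simp
      rw [h1, h2, map_zero, zero_add, ← inr_ppow, Unitization.algebraMap_eq_inl,
        Unitization.inl_mul_inr, Unitization.inr_smul]
  -- every element of A is hit by φ
  have surj : ∀ s : R, s ∈ A → ∃ f : ℤ[X], φ f = (↑s : T) := by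
    intro s hs
    induction hs using NonUnitalSubring.closure_induction with
    | mem x hx =>
      rcases hx with rfl
      exact ⟨X, by simp [hφ]⟩
    | zero => exact ⟨0, by simp⟩
    | add x y hx hy ihx ihy =>
      obtain ⟨f, hf⟩ := ihx; obtain ⟨g, hg⟩ := ihy
      exact ⟨f + g, by rw [map_add, hf, hg, Unitization.inr_add]⟩
    | neg x hx ihx =>
      obtain ⟨f, hf⟩ := ihx
      exact ⟨-f, by rw [map_neg, hf, Unitization.inr_neg]⟩
    | mul x y hx hy ihx ihy =>
      obtain ⟨f, hf⟩ := ihx; obtain ⟨g, hg⟩ := ihy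
      exact ⟨f * g, by rw [map_mul, hf, hg, Unitization.inr_mul]⟩
  set I : Ideal ℤ[X] := RingHom.ker φ with hI
  have hXjac : X ∈ I.jacobson := by
    rw [Ideal.mem_jacobson_iff]
    intro y
    -- φ (y * X) = ↑s for some s ∈ A
    obtain ⟨s, hsA, hs⟩ := repr (y * X)
    have hc0 : ((y * X : ℤ[X])).coeff 0 = 0 := by
      simp [Polynomial.mul_coeff_zero]
    rw [hc0, map_zero, zero_add] at hs
    -- quasi-regularity of s in A
    obtain ⟨b, hb1, hb2⟩ := h A ⟨s, hsA⟩
    have hb2' : s + (b : R) + (b : R) * s = 0 := by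
      have := congrArg (Subtype.val) hb2
      simpa using this
    obtain ⟨g, hg⟩ := surj (b : R) b.2
    refine ⟨1 + g, ?_⟩
    rw [RingHom.mem_ker, mul_assoc]
    have hmap : φ ((1 + g) * (y * X) + (1 + g) - 1) =
        (1 + (↑(b : R) : T)) * (↑s : T) + (1 + (↑(b : R) : T)) - 1 := by
      simp only [map_sub, map_add, map_mul, map_one, hg, hs]
    have h0 : (↑s : T) + (↑(b : R) : T) + (↑(b : R) : T) * (↑s : T) = 0 := by
      rw [← Unitization.inr_mul, ← Unitization.inr_add, ← Unitization.inr_add, hb2',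
        Unitization.inr_zero]
    have hexp : (1 + (↑(b : R) : T)) * (↑s : T) + (1 + (↑(b : R) : T)) - 1 =
        (↑s : T) + (↑(b : R) : T) + (↑(b : R) : T) * (↑s : T) := by
      noncomm_ring
    rw [hmap, hexp, h0]
  have hXrad : X ∈ I.radical := by
    rwa [Ideal.radical_eq_jacobson]
  obtain ⟨n, hn⟩ := Ideal.mem_radical_iff.mp hXrad
  have hφXn : (↑a : T) ^ n = 0 := by
    have := RingHom.mem_ker.mp hn
    rwa [map_pow, show φ X = (↑a : T) by simp [hφ]] at this
  cases n with
  | zero =>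
    rw [pow_zero] at hφXn
    exact absurd hφXn one_ne_zero
  | succ m =>
    refine ⟨m, Unitization.inr_injective (R := ℤ) ?_⟩
    rw [inr_ppow, Unitization.inr_zero, hφXn]
end

section
/- Let R = ⊕_{i∈ℤ} R_i be a ℤ-graded (associative, not necessarily unital) ring, let W be the set of homogeneous elements of R lying in the nil radical N(R), and let M = Σ_{a∈W} ⟨a⟩ be the sum of the two-sided ideals generated by the elements of W. Then M is a homogeneous nil ideal of R, and the nil radical of the quotient ring R/M contains no nonzero homogeneous elements (with respect to the induced ℤ-grading on R/M). -/
section helpers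
variable {R : Type*} [NonUnitalRing R]

lemma ppow_add' (a : R) (m n : ℕ) : ppow a (m + n + 1) = ppow a m * ppow a n := by
  induction n with
  | zero => rfl
  | succ n ih =>
    show ppow a (m + n + 1) * a = _
    rw [ih, mul_assoc]; rfl

lemma ppow_ppow (a : R) (n m : ℕ) : ppow (ppow a n) m = ppow a (n + m + n * m) := by
  induction m with
  | zero => simp [ppow]
  | succ m ih =>
    show ppow (ppow a n) m * ppow a n = _
    rw [ih, ← ppow_add' a (n + m + n * m) n]
    congr 1; ring

lemma isNilElem_of_ppow_mem {I : TwoSidedIdeal R} (hI : I.IsNil) {a : R} {n : ℕ}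
    (h : ppow a n ∈ I) : IsNilElem a := by
  obtain ⟨m, hm⟩ := hI _ h
  exact ⟨n + m + n * m, by rw [← ppow_ppow]; exact hm⟩

lemma ppow_sub_ppow_mem (I : TwoSidedIdeal R) {a b : R} (h : a - b ∈ I) (n : ℕ) :
    ppow a n - ppow b n ∈ I := by
  induction n with
  | zero => exact h
  | succ n ih =>
    have key : ppow a (n + 1) - ppow b (n + 1) =
        (ppow a n - ppow b n) * a + ppow b n * (a - b) := by
      show ppow a n * a - ppow b n * b = _
      noncomm_ring
    rw [key]
    exact I.add_mem (I.mul_mem_right _ _ ih) (I.mul_mem_left _ _ h)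

lemma isNil_sup {I J : TwoSidedIdeal R} (hI : I.IsNil) (hJ : J.IsNil) : (I ⊔ J).IsNil := by
  intro x hx
  rw [TwoSidedIdeal.mem_sup] at hx
  obtain ⟨y, hy, z, hz, rfl⟩ := hx
  obtain ⟨m, hm⟩ := hJ z hz
  have h1 : ppow (y + z) m - ppow z m ∈ I := ppow_sub_ppow_mem I (by simpa using hy) m
  rw [hm, sub_zero] at h1
  exact isNilElem_of_ppow_mem hI h1

lemma mem_sSup_of_directed {S : Set (TwoSidedIdeal R)} (hne : S.Nonempty)
    (hdir : DirectedOn (· ≤ ·) S) {x : R} (hx : x ∈ sSup S) : ∃ I ∈ S, x ∈ I := by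
  obtain ⟨I₀, hI₀⟩ := hne
  let T : TwoSidedIdeal R := TwoSidedIdeal.mk' (⋃ I ∈ S, (I : Set R))
    (Set.mem_biUnion hI₀ I₀.zero_mem)
    (by
      rintro a b ha hb
      obtain ⟨I, hI, haI⟩ := Set.mem_iUnion₂.1 ha
      obtain ⟨J, hJ, hbJ⟩ := Set.mem_iUnion₂.1 hb
      obtain ⟨K, hK, hIK, hJK⟩ := hdir I hI J hJ
      exact Set.mem_biUnion hK (K.add_mem (hIK haI) (hJK hbJ)))
    (by
      rintro a ha
      obtain ⟨I, hI, haI⟩ := Set.mem_iUnion₂.1 ha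
      exact Set.mem_biUnion hI (I.neg_mem haI))
    (by
      rintro a b hb
      obtain ⟨I, hI, hbI⟩ := Set.mem_iUnion₂.1 hb
      exact Set.mem_biUnion hI (I.mul_mem_left _ _ hbI))
    (by
      rintro a b ha
      obtain ⟨I, hI, haI⟩ := Set.mem_iUnion₂.1 ha
      exact Set.mem_biUnion hI (I.mul_mem_right _ _ haI))
  have hle : sSup S ≤ T := sSup_le fun I hI => by
    intro y hy
    rw [TwoSidedIdeal.mem_mk']
    exact Set.mem_biUnion hI hy
  have := hle hx
  rw [TwoSidedIdeal.mem_mk'] at this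
  obtain ⟨I, hI, hxI⟩ := Set.mem_iUnion₂.1 this
  exact ⟨I, hI, hxI⟩

lemma isNil_bot : (⊥ : TwoSidedIdeal R).IsNil := by
  intro x hx
  have : x = 0 := by simpa using hx
  exact ⟨0, by simp [ppow, this]⟩

lemma nilRad_isNil (R : Type*) [NonUnitalRing R] : (nilRad R).IsNil := by
  intro x hx
  have hdir : DirectedOn (· ≤ ·) {I : TwoSidedIdeal R | I.IsNil} := fun I hI J hJ =>
    ⟨I ⊔ J, isNil_sup hI hJ, le_sup_left, le_sup_right⟩
  obtain ⟨I, hI, hxI⟩ := mem_sSup_of_directed ⟨⊥, by exact isNil_bot⟩ hdir hx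
  exact hI x hxI

end helpers
section graded
variable {R : Type*} [NonUnitalRing R] (ℳ : ℤ → AddSubgroup R)
  [SetLike.GradedMul ℳ] [DirectSum.Decomposition ℳ]

lemma decompose_mul_left_mem {r : R} {j : ℤ} (hr : r ∈ ℳ j) (x : R) (i : ℤ) :
    (DirectSum.decompose ℳ (r * x) i : R) = r * (DirectSum.decompose ℳ x (i - j) : R) := by
  induction x using DirectSum.Decomposition.inductionOn ℳ with
  | zero => simp
  | @homogeneous k x =>
    have hmem : r * (x : R) ∈ ℳ (j + k) := SetLike.mul_mem_graded hr x.2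
    by_cases h : i = j + k
    · subst h
      rw [DirectSum.decompose_of_mem_same ℳ hmem,
        show j + k - j = k by ring, DirectSum.decompose_of_mem_same ℳ x.2]
    · rw [DirectSum.decompose_of_mem_ne ℳ hmem (fun hc => h hc.symm),
        DirectSum.decompose_of_mem_ne ℳ x.2 (fun hc => h (by omega)), mul_zero]
  | add a b ha hb =>
    simp only [mul_add, DirectSum.decompose_add, DirectSum.add_apply, AddSubgroup.coe_add, ha, hb]

lemma decompose_mul_right_mem {r : R} {j : ℤ} (hr : r ∈ ℳ j) (x : R) (i : ℤ) :
    (DirectSum.decompose ℳ (x * r) i : R) = (DirectSum.decompose ℳ x (i - j) : R) * r := by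
  induction x using DirectSum.Decomposition.inductionOn ℳ with
  | zero => simp
  | @homogeneous k x =>
    have hmem : (x : R) * r ∈ ℳ (k + j) := SetLike.mul_mem_graded x.2 hr
    by_cases h : i = k + j
    · subst h
      rw [DirectSum.decompose_of_mem_same ℳ hmem,
        show k + j - j = k by ring, DirectSum.decompose_of_mem_same ℳ x.2]
    · rw [DirectSum.decompose_of_mem_ne ℳ hmem (fun hc => h hc.symm),
        DirectSum.decompose_of_mem_ne ℳ x.2 (fun hc => h (by omega)), zero_mul]
  | add a b ha hb =>
    simp only [add_mul, DirectSum.decompose_add, DirectSum.add_apply, AddSubgroup.coe_add, ha, hb]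

end graded

section quot
variable {R : Type*} [NonUnitalRing R] (M : TwoSidedIdeal R)

lemma coe_ppow_quot (x : R) (n : ℕ) :
    ((ppow x n : R) : M.ringCon.Quotient) = ppow (x : M.ringCon.Quotient) n := by
  induction n with
  | zero => rfl
  | succ n ih => show ((ppow x n * x : R) : M.ringCon.Quotient) = _; rw [RingCon.coe_mul, ih]; rfl

lemma mem_iff_quot_zero (x : R) : x ∈ M ↔ (x : M.ringCon.Quotient) = 0 := by
  rw [TwoSidedIdeal.mem_iff, show (0 : M.ringCon.Quotient) = ((0 : R) : M.ringCon.Quotient) from rfl,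
    RingCon.eq]

end quot

/-- Let `R = ⊕_{i ∈ ℤ} Rᵢ` be a `ℤ`-graded (associative, not necessarily unital) ring, let `W`
be the set of homogeneous elements of `R` lying in the nil radical, and let
`M = ∑_{a ∈ W} ⟨a⟩` be the sum of the two-sided ideals generated by the elements of `W`.
Then `M` is a homogeneous nil ideal of `R`, and the nil radical of `R/M` contains no nonzero
homogeneous elements (where a homogeneous element of `R/M` is the image of a homogeneous element
of `R` under the quotient map). -/
theorem homogeneous_nil_ideal_sum {R : Type*} [NonUnitalRing R]
    (ℳ : ℤ → AddSubgroup R) [SetLike.GradedMul ℳ] [DirectSum.Decomposition ℳ]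
    (W : Set R) (hW : W = {x : R | x ∈ nilRad R ∧ ∃ i : ℤ, x ∈ ℳ i})
    (M : TwoSidedIdeal R) (hM : M = ⨆ a ∈ W, TwoSidedIdeal.span {a}) :
    (∀ x ∈ M, ∀ i : ℤ, (DirectSum.decompose ℳ x i : R) ∈ M) ∧
    M.IsNil ∧
    (∀ y ∈ nilRad M.ringCon.Quotient,
      (∃ i : ℤ, ∃ x ∈ ℳ i, (x : M.ringCon.Quotient) = y) → y = 0) := by
  -- every element of W lies in M
  have hWM : ∀ a ∈ W, a ∈ M := by
    intro a ha
    have : TwoSidedIdeal.span {a} ≤ M := hM ▸ le_iSup₂ (f := fun a _ => TwoSidedIdeal.span {a}) a ha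
    exact this (TwoSidedIdeal.subset_span rfl)
  -- Part 2 first: M is nil
  have hMle : M ≤ nilRad R := by
    rw [hM]
    refine iSup₂_le fun a ha => ?_
    intro x hx
    refine TwoSidedIdeal.mem_span_iff.1 hx (nilRad R) ?_
    rw [Set.singleton_subset_iff]
    exact (hW ▸ ha).1
  have hMnil : M.IsNil := fun x hx => nilRad_isNil R x (hMle hx)
  -- Part 1: homogeneity
  have hhomog : ∀ x ∈ M, ∀ i : ℤ, (DirectSum.decompose ℳ x i : R) ∈ M := by
    set P : TwoSidedIdeal R := TwoSidedIdeal.mk'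
      {x : R | ∀ i : ℤ, (DirectSum.decompose ℳ x i : R) ∈ M}
      (by intro i; simp only [DirectSum.decompose_zero]; simpa using M.zero_mem)
      (by
        intro a b ha hb i
        rw [DirectSum.decompose_add]
        push_cast
        exact M.add_mem (ha i) (hb i))
      (by
        intro a ha i
        rw [DirectSum.decompose_neg]
        push_cast
        exact M.neg_mem (ha i))
      (by
        intro r x hx
        induction r using DirectSum.Decomposition.inductionOn ℳ with
        | zero => intro i; rw [zero_mul]; simpa using M.zero_mem
        | @homogeneous j r =>
          intro i
          rw [decompose_mul_left_mem ℳ r.2]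
          exact M.mul_mem_left _ _ (hx _)
        | add a b ha hb =>
          intro i
          rw [add_mul, DirectSum.decompose_add]
          push_cast
          exact M.add_mem (ha i) (hb i))
      (by
        intro x r hx
        induction r using DirectSum.Decomposition.inductionOn ℳ with
        | zero => intro i; rw [mul_zero]; simpa using M.zero_mem
        | @homogeneous j r =>
          intro i
          rw [decompose_mul_right_mem ℳ r.2]
          exact M.mul_mem_right _ _ (hx _)
        | add a b ha hb =>
          intro i
          rw [mul_add, DirectSum.decompose_add]
          push_cast
          exact M.add_mem (ha i) (hb i))
    have hMP : M ≤ P := by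
      rw [hM]
      refine iSup₂_le fun a ha => ?_
      intro x hx
      refine TwoSidedIdeal.mem_span_iff.1 hx P ?_
      rw [Set.singleton_subset_iff]
      rw [SetLike.mem_coe, TwoSidedIdeal.mem_mk']
      intro i
      obtain ⟨j, hj⟩ := (hW ▸ ha).2
      by_cases h : i = j
      · subst h; rw [DirectSum.decompose_of_mem_same ℳ hj]; exact hWM a ha
      · rw [DirectSum.decompose_of_mem_ne ℳ hj (Ne.symm h)]; exact M.zero_mem
    intro x hx i
    have := hMP hx
    rw [TwoSidedIdeal.mem_mk'] at this
    exact this i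
  refine ⟨hhomog, hMnil, ?_⟩
  -- Part 3
  intro y hy ⟨i, x, hxi, hxy⟩
  -- the preimage of nilRad of the quotient is a nil ideal
  set Q := M.ringCon.Quotient
  set I : TwoSidedIdeal R := TwoSidedIdeal.mk'
    {z : R | (z : Q) ∈ nilRad Q}
    (by
      show ((0 : R) : Q) ∈ nilRad Q
      rw [RingCon.coe_zero]
      exact (nilRad Q).zero_mem)
    (by
      intro a b ha hb
      show ((a + b : R) : Q) ∈ nilRad Q
      rw [RingCon.coe_add]
      exact (nilRad Q).add_mem ha hb)
    (by
      intro a ha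
      show ((-a : R) : Q) ∈ nilRad Q
      rw [RingCon.coe_neg]
      exact (nilRad Q).neg_mem ha)
    (by
      intro a b hb
      show ((a * b : R) : Q) ∈ nilRad Q
      rw [RingCon.coe_mul]
      exact (nilRad Q).mul_mem_left _ _ hb)
    (by
      intro a b ha
      show ((a * b : R) : Q) ∈ nilRad Q
      rw [RingCon.coe_mul]
      exact (nilRad Q).mul_mem_right _ _ ha)
  have hInil : I.IsNil := by
    intro z hz
    rw [TwoSidedIdeal.mem_mk'] at hz
    obtain ⟨n, hn⟩ := nilRad_isNil Q _ hz
    have : ppow z n ∈ M := by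
      rw [mem_iff_quot_zero, coe_ppow_quot]; exact hn
    exact isNilElem_of_ppow_mem hMnil this
  have hxI : x ∈ I := by
    rw [TwoSidedIdeal.mem_mk']
    show (x : Q) ∈ nilRad Q
    rw [hxy]; exact hy
  have hIle : I ≤ nilRad R := le_sSup (by exact hInil)
  have hxnil : x ∈ nilRad R := hIle hxI
  have hxW : x ∈ W := hW ▸ ⟨hxnil, i, hxi⟩
  have hxM : x ∈ M := hWM x hxW
  rw [← hxy, ← (mem_iff_quot_zero M x).1 hxM]
end
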